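/- Under the isomorphism Cl(V ⊕ ℝ^{1,1}) ≅ Mat₂(Cl(V)), the reversal is given by [[a,b],[c,d]] ↦ [[d̄, b̄],[c̄, ā]], where x̄ denotes the Clifford conjugation on Cl(V). -/
import Mathlib


open CliffordAlgebra

noncomputable def negQhat {V : Type*} [AddCommGroup V] [Module ℝ V]
    (Q : QuadraticForm ℝ V) : QuadraticForm ℝ (V × ℝ × ℝ) :=
  QuadraticMap.prod (-Q) (QuadraticMap.prod QuadraticMap.sq (-QuadraticMap.sq))

/-- The Clifford map `j : V ⊕ ℝ^{1,1} → Mat₂(Cl(V))`,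
`j(v + x₋e₋ + x₊e₊) = [[v, x₋-x₊],[x₋+x₊, -v]]` (convention `v² = -Q v`). -/
noncomputable def jmat {V : Type*} [AddCommGroup V] [Module ℝ V]
    (Q : QuadraticForm ℝ V) (x : V × ℝ × ℝ) :
    Matrix (Fin 2) (Fin 2) (CliffordAlgebra (-Q)) :=
  !![ι (-Q) x.1, algebraMap ℝ _ (x.2.1 - x.2.2);
     algebraMap ℝ _ (x.2.1 + x.2.2), -ι (-Q) x.1]

namespace Rev11Aux

variable {V : Type*} [AddCommGroup V] [Module ℝ V] {Q : QuadraticForm ℝ V}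

noncomputable def cj (x : CliffordAlgebra (-Q)) : CliffordAlgebra (-Q) :=
  reverse (involute x)

lemma cj_mul (x y : CliffordAlgebra (-Q)) : cj (x * y) = cj y * cj x := by
  simp [cj, map_mul, reverse.map_mul]

lemma cj_add (x y : CliffordAlgebra (-Q)) : cj (x + y) = cj x + cj y := by
  simp [cj, map_add]

lemma cj_zero : cj (0 : CliffordAlgebra (-Q)) = 0 := by simp [cj]

lemma cj_algebraMap (r : ℝ) :
    cj (algebraMap ℝ (CliffordAlgebra (-Q)) r) = algebraMap ℝ _ r := by
  simp [cj]

noncomputable def tau (M : Matrix (Fin 2) (Fin 2) (CliffordAlgebra (-Q))) :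
    Matrix (Fin 2) (Fin 2) (CliffordAlgebra (-Q)) :=
  !![cj (M 1 1), cj (M 0 1); cj (M 1 0), cj (M 0 0)]

lemma tau_mul (M N : Matrix (Fin 2) (Fin 2) (CliffordAlgebra (-Q))) :
    tau (M * N) = tau N * tau M := by
  have h : ∀ i j, (M * N) i j = M i 0 * N 0 j + M i 1 * N 1 j := fun i j => by
    rw [Matrix.mul_apply, Fin.sum_univ_two]
  ext i j
  fin_cases i <;> fin_cases j <;>
    simp [tau, Matrix.mul_apply, Fin.sum_univ_two, h, cj_add, cj_mul] <;> abel

lemma tau_add (M N : Matrix (Fin 2) (Fin 2) (CliffordAlgebra (-Q))) :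
    tau (M + N) = tau M + tau N := by
  rw [Matrix.eta_fin_two M, Matrix.eta_fin_two N]
  ext i j
  fin_cases i <;> fin_cases j <;> simp [tau, cj_add]

lemma tau_algebraMap (r : ℝ) :
    tau (algebraMap ℝ (Matrix (Fin 2) (Fin 2) (CliffordAlgebra (-Q))) r) =
      algebraMap ℝ _ r := by
  ext i j
  fin_cases i <;> fin_cases j <;>
    simp [tau, Matrix.algebraMap_matrix_apply, cj_algebraMap, cj_zero]

end Rev11Aux

open Rev11Aux in
/-- under the isomorphism `Cl(V ⊕ ℝ^{1,1}) ≅ Mat₂(Cl(V))`, the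
reversal is `[[a,b],[c,d]] ↦ [[d̄, b̄],[c̄, ā]]` where `x̄ = reverse (involute x)`
is the Clifford conjugation on `Cl(V)`. -/
theorem reversal_matrix (V : Type*) [AddCommGroup V] [Module ℝ V]
    (Q : QuadraticForm ℝ V)
    (F : CliffordAlgebra (negQhat Q) ≃ₐ[ℝ] Matrix (Fin 2) (Fin 2) (CliffordAlgebra (-Q)))
    (hF : ∀ x : V × ℝ × ℝ, F (ι (negQhat Q) x) = jmat Q x)
    (a b c d : CliffordAlgebra (-Q)) :
    F (reverse (F.symm !![a, b; c, d])) =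
      !![reverse (involute d), reverse (involute b);
         reverse (involute c), reverse (involute a)] := by
  have key : ∀ y : CliffordAlgebra (negQhat Q), F (reverse y) = tau (F y) := by
    intro y
    induction y using CliffordAlgebra.induction with
    | algebraMap r =>
        rw [reverse.commutes, F.commutes, tau_algebraMap]
    | ι x =>
        rw [reverse_ι, hF]
        ext i j
        fin_cases i <;> fin_cases j <;>
          simp [tau, jmat, cj, involute_ι]
    | mul x y hx hy =>
        rw [reverse.map_mul, map_mul, map_mul, hx, hy, tau_mul]
    | add x y hx hy =>
        rw [map_add, map_add, map_add, hx, hy, tau_add]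
  rw [key, F.apply_symm_apply]
  ext i j
  fin_cases i <;> fin_cases j <;> simp [tau, cj]
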